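/- The action of G on Γ_G is isometric: for all f, g, h ∈ G, α ∈ [0,|g|], β ∈ [0,|h|], d(f·⟨α,g⟩, f·⟨β,h⟩) = d(⟨α,g⟩, ⟨β,h⟩). In particular d(f·ε, f·⟨α,g⟩) = d(ε, ⟨α,g⟩) = α where ε = ⟨0,1⟩. -/

import Mathlib

/-- The action of `G` on `Γ_G` is isometric: for all `f, g, h ∈ G`,
`α ∈ [0,|g|]`, `β ∈ [0,|h|]`, `d(f·⟨α,g⟩, f·⟨β,h⟩) = d(⟨α,g⟩, ⟨β,h⟩)`.
In particular `d(f·ε, f·⟨α,g⟩) = d(ε, ⟨α,g⟩) = α`, where `ε = ⟨0,1⟩`.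

`G ≤ CDR(Λ,X)` is abstracted as a group with a free Lyndon length function
`l : G → Λ` (Λ discretely ordered), Gromov product `c`, universal-tree metric
`d(⟨α,f⟩,⟨β,g⟩) = α+β−2min{α,β,c(f,g)}`, and the action
`f·⟨α,g⟩ = ⟨|f|+α−2min{α,c(f⁻¹,g)}, f⟩` if `α ≤ c(f⁻¹,g)`, else
`⟨|f|+α−2c(f⁻¹,g), f*g⟩`. -/
theorem universal_tree_action_isometric {Λ : Type*} [AddCommGroup Λ] [LinearOrder Λ] [IsOrderedAddMonoid Λ]
    [One Λ] (hone : (0 : Λ) < 1) (hdisc : ∀ e : Λ, 0 < e → (1 : Λ) ≤ e)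
    {G : Type*} [Group G] (l : G → Λ) (c : G → G → Λ)
    (hc : ∀ x y, 2 • c x y = l x + l y - l (x⁻¹ * y))
    (hL1 : ∀ x, 0 ≤ l x) (hL1' : l 1 = 0)
    (hL2 : ∀ x, l x⁻¹ = l x)
    (hL3 : ∀ x y z, c x z < c x y → c x z = c y z)
    (hfree : ∀ g : G, g ≠ 1 → l g < l (g * g))
    (d : Λ × G → Λ × G → Λ)
    (hd : ∀ p q : Λ × G, d p q = p.1 + q.1 - 2 • min p.1 (min q.1 (c p.2 q.2)))
    (act : G → Λ × G → Λ × G)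
    (hact : ∀ (f : G) (p : Λ × G), act f p =
      if p.1 ≤ c f⁻¹ p.2 then (l f + p.1 - 2 • min p.1 (c f⁻¹ p.2), f)
      else (l f + p.1 - 2 • c f⁻¹ p.2, f * p.2)) :
    ∀ (f g h : G) (α β : Λ),
      0 ≤ α → α ≤ l g → 0 ≤ β → β ≤ l h →
      (d (act f (α, g)) (act f (β, h)) = d (α, g) (β, h)) ∧
      (d (act f ((0 : Λ), (1 : G))) (act f (α, g)) = d ((0 : Λ), (1 : G)) (α, g)) ∧
      (d ((0 : Λ), (1 : G)) (α, g) = α) := by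
  -- helper: linear-order reasoning from differences
  have lin : ∀ {u v x y : Λ}, u ≤ v → y - x = v - u → x ≤ y := by
    intro u v x y huv hxy
    have h0 : (0 : Λ) ≤ y - x := by rw [hxy]; exact sub_nonneg.mpr huv
    exact sub_nonneg.mp h0
  have lin2 : ∀ {u v s t x y : Λ}, u ≤ v → s ≤ t → y - x = (v - u) + (t - s) → x ≤ y := by
    intro u v s t x y huv hst hxy
    have h0 : (0 : Λ) ≤ y - x := by
      rw [hxy]; exact add_nonneg (sub_nonneg.mpr huv) (sub_nonneg.mpr hst)
    exact sub_nonneg.mp h0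
  have two_inj : ∀ a b : Λ, a + a = b + b → a = b := by
    intro a b hab
    rcases lt_trichotomy a b with hh | hh | hh
    · exact absurd hab (ne_of_lt (add_lt_add hh hh))
    · exact hh
    · exact absurd hab (ne_of_gt (add_lt_add hh hh))
  have hc2 : ∀ x y, c x y + c x y = l x + l y - l (x⁻¹ * y) := by
    intro x y; have := hc x y; rwa [two_nsmul] at this
  have csymm : ∀ x y, c x y = c y x := by
    intro x y
    apply two_inj
    rw [hc2, hc2, show y⁻¹ * x = (x⁻¹ * y)⁻¹ by group, hL2]
    abel
  have c_self : ∀ x, c x x = l x := by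
    intro x; apply two_inj; rw [hc2]; simp [hL1']
  have c_one : ∀ x, c 1 x = 0 := by
    intro x; apply two_inj; rw [hc2]; simp [hL1']
  have c_nonneg : ∀ x y, 0 ≤ c x y := by
    intro x y
    by_contra hlt
    push_neg at hlt
    have h0 : c x y < c x 1 := by rw [csymm x 1, c_one]; exact hlt
    have h1 := hL3 x 1 y h0
    rw [c_one] at h1
    exact absurd h1 (ne_of_lt hlt)
  have cmin : ∀ x y z, min (c x y) (c y z) ≤ c x z := by
    intro x y z
    rcases lt_or_ge (c x z) (c x y) with hlt | hle
    · exact le_of_le_of_eq (min_le_right _ _) (hL3 x y z hlt).symm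
    · exact le_trans (min_le_left _ _) hle
  have cshift : ∀ f h : G, c f (f * h) = l f - c f⁻¹ h := by
    intro f h
    apply two_inj
    have e1 := hc2 f (f * h)
    have e2 := hc2 f⁻¹ h
    rw [show f⁻¹ * (f * h) = h by group] at e1
    rw [show f⁻¹⁻¹ * h = f * h by group, hL2] at e2
    rw [e1, show (l f - c f⁻¹ h) + (l f - c f⁻¹ h)
        = l f + l f - (c f⁻¹ h + c f⁻¹ h) from by abel, e2]
    abel
  have ctrans : ∀ f g h : G, c (f * g) (f * h) = l f - c f⁻¹ g - c f⁻¹ h + c g h := by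
    intro f g h
    apply two_inj
    have e1 := hc2 (f * g) (f * h)
    have e2 := hc2 f⁻¹ g
    have e3 := hc2 f⁻¹ h
    have e4 := hc2 g h
    rw [show (f * g)⁻¹ * (f * h) = g⁻¹ * h by group] at e1
    rw [show f⁻¹⁻¹ * g = f * g by group, hL2] at e2
    rw [show f⁻¹⁻¹ * h = f * h by group, hL2] at e3
    rw [e1, show (l f - c f⁻¹ g - c f⁻¹ h + c g h) + (l f - c f⁻¹ g - c f⁻¹ h + c g h)
        = l f + l f - (c f⁻¹ g + c f⁻¹ g) - (c f⁻¹ h + c f⁻¹ h) + (c g h + c g h) from by abel,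
      e2, e3, e4]
    abel
  have dsymm : ∀ p q, d p q = d q p := by
    intro p q
    rw [hd, hd, csymm q.2 p.2, min_left_comm]
    abel
  -- Case 1 : α ≤ β, α ≤ c(f⁻¹,g), β ≤ c(f⁻¹,h)
  have case1 : ∀ (f g h : G) (α β : Λ), 0 ≤ α → α ≤ β →
      α ≤ c f⁻¹ g → β ≤ c f⁻¹ h →
      d (act f (α, g)) (act f (β, h)) = d (α, g) (β, h) := by
    intro f g h α β hα hab h1 h2
    have hβ : 0 ≤ β := le_trans hα hab
    have hCmin : min (c f⁻¹ g) (c f⁻¹ h) ≤ c g h := by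
      have := cmin g f⁻¹ h; rwa [csymm g f⁻¹] at this
    have hαC : α ≤ c g h := le_trans (le_min h1 (le_trans hab h2)) hCmin
    rw [hact f (α, g), hact f (β, h)]
    dsimp only
    rw [if_pos h1, if_pos h2, hd, hd]
    dsimp only
    rw [min_eq_left h1, min_eq_left h2, c_self]
    have m1 : min (l f + β - 2 • β) (l f) = l f + β - 2 • β := by
      apply min_eq_left
      exact lin hβ (by simp only [two_nsmul]; abel)
    rw [m1]
    have m2 : min (l f + α - 2 • α) (l f + β - 2 • β) = l f + β - 2 • β := by
      apply min_eq_right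
      exact lin hab (by simp only [two_nsmul]; abel)
    rw [m2]
    have m3 : min α (min β (c g h)) = α := min_eq_left (le_min hab hαC)
    rw [m3]
    simp only [two_nsmul]
    abel
  -- Case 2 : α ≤ c(f⁻¹,g), c(f⁻¹,h) < β
  have case2 : ∀ (f g h : G) (α β : Λ), 0 ≤ α →
      α ≤ c f⁻¹ g → c f⁻¹ h < β →
      d (act f (α, g)) (act f (β, h)) = d (α, g) (β, h) := by
    intro f g h α β hα h1 h2
    have hCmin : min (c f⁻¹ g) (c f⁻¹ h) ≤ c g h := by
      have := cmin g f⁻¹ h; rwa [csymm g f⁻¹] at this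
    rw [hact f (α, g), hact f (β, h)]
    dsimp only
    rw [if_pos h1, if_neg (not_le.mpr h2), hd, hd]
    dsimp only
    rw [min_eq_left h1, cshift f h]
    have m1 : min (l f + β - 2 • c f⁻¹ h) (l f - c f⁻¹ h) = l f - c f⁻¹ h := by
      apply min_eq_right
      exact lin h2.le (by simp only [two_nsmul]; abel)
    rw [m1]
    rcases le_total α (c f⁻¹ h) with hab | hab
    · have m2 : min (l f + α - 2 • α) (l f - c f⁻¹ h) = l f - c f⁻¹ h := by
        apply min_eq_right
        exact lin hab (by simp only [two_nsmul]; abel)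
      have m3 : min α (min β (c g h)) = α := by
        apply min_eq_left
        exact le_min (le_of_lt (lt_of_le_of_lt hab h2)) (le_trans (le_min h1 hab) hCmin)
      rw [m2, m3]
      simp only [two_nsmul]
      abel
    · have m2 : min (l f + α - 2 • α) (l f - c f⁻¹ h) = l f + α - 2 • α := by
        apply min_eq_left
        exact lin hab (by simp only [two_nsmul]; abel)
      have hBA : c f⁻¹ h ≤ c f⁻¹ g := le_trans hab h1
      have hBC : c f⁻¹ h ≤ c g h := by
        rw [min_eq_right hBA] at hCmin; exact hCmin
      have hup : min α (min β (c g h)) ≤ c f⁻¹ h := by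
        rcases eq_or_lt_of_le hBA with heq | hlt
        · exact le_trans (min_le_left _ _) (le_trans h1 heq.symm.le)
        · have hCB : c g h ≤ c f⁻¹ h := (hL3 f⁻¹ g h hlt).symm.le
          exact le_trans (min_le_right _ _) (le_trans (min_le_right _ _) hCB)
      have m3 : min α (min β (c g h)) = c f⁻¹ h :=
        le_antisymm hup (le_min hab (le_min h2.le hBC))
      rw [m2, m3]
      simp only [two_nsmul]
      abel
  -- Case 4 : c(f⁻¹,g) < α, c(f⁻¹,h) < β, with c(f⁻¹,g) ≤ c(f⁻¹,h)
  have case4 : ∀ (f g h : G) (α β : Λ), c f⁻¹ g < α → c f⁻¹ h < β →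
      c f⁻¹ g ≤ c f⁻¹ h →
      d (act f (α, g)) (act f (β, h)) = d (α, g) (β, h) := by
    intro f g h α β h1 h2 hAB
    rw [hact f (α, g), hact f (β, h)]
    dsimp only
    rw [if_neg (not_le.mpr h1), if_neg (not_le.mpr h2), hd, hd]
    dsimp only
    rw [ctrans f g h]
    rcases eq_or_lt_of_le hAB with heq | hlt
    · rw [← heq]
      have e1 : l f + α - 2 • c f⁻¹ g = l f - 2 • c f⁻¹ g + α := by abel
      have e2 : l f + β - 2 • c f⁻¹ g = l f - 2 • c f⁻¹ g + β := by abel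
      have e3 : l f - c f⁻¹ g - c f⁻¹ g + c g h = l f - 2 • c f⁻¹ g + c g h := by
        simp only [two_nsmul]; abel
      rw [e1, e2, e3, min_add_add_left, min_add_add_left]
      simp only [two_nsmul]
      abel
    · have hCA : c g h = c f⁻¹ g := by
        rw [csymm g h]; exact (hL3 f⁻¹ h g hlt).symm
      rw [hCA]
      have m1 : min (l f + β - 2 • c f⁻¹ h) (l f - c f⁻¹ g - c f⁻¹ h + c f⁻¹ g)
          = l f - c f⁻¹ g - c f⁻¹ h + c f⁻¹ g := by
        apply min_eq_right
        exact lin h2.le (by simp only [two_nsmul]; abel)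
      rw [m1]
      have m2 : min (l f + α - 2 • c f⁻¹ g) (l f - c f⁻¹ g - c f⁻¹ h + c f⁻¹ g)
          = l f - c f⁻¹ g - c f⁻¹ h + c f⁻¹ g := by
        apply min_eq_right
        exact lin2 h1.le hAB (by simp only [two_nsmul]; abel)
      rw [m2]
      have m3 : min α (min β (c f⁻¹ g)) = c f⁻¹ g := by
        rw [min_eq_right (le_of_lt (lt_trans hlt h2)), min_eq_right h1.le]
      rw [m3]
      simp only [two_nsmul]
      abel
  have main : ∀ (f g h : G) (α β : Λ), 0 ≤ α → α ≤ l g → 0 ≤ β → β ≤ l h →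
      d (act f (α, g)) (act f (β, h)) = d (α, g) (β, h) := by
    intro f g h α β hα _ hβ _
    rcases le_or_gt α (c f⁻¹ g) with h1 | h1 <;> rcases le_or_gt β (c f⁻¹ h) with h2 | h2
    · rcases le_total α β with hab | hab
      · exact case1 f g h α β hα hab h1 h2
      · rw [dsymm, dsymm (α, g)]; exact case1 f h g β α hβ hab h2 h1
    · exact case2 f g h α β hα h1 h2
    · rw [dsymm, dsymm (α, g)]; exact case2 f h g β α hβ h2 h1
    · rcases le_total (c f⁻¹ g) (c f⁻¹ h) with hAB | hAB
      · exact case4 f g h α β h1 h2 hAB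
      · rw [dsymm, dsymm (α, g)]; exact case4 f h g β α h2 h1 hAB
  intro f g h α β hα hαg hβ hβh
  refine ⟨main f g h α β hα hαg hβ hβh, ?_, ?_⟩
  · exact main f 1 g 0 α le_rfl (le_of_eq hL1'.symm) hα hαg
  · rw [hd]
    dsimp only
    rw [c_one g, min_eq_right hα, min_self, smul_zero, sub_zero, zero_add]
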